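/- The asymptotic density of reducible profiles is zero: letting R(n) be the number of reducible profiles of size at most n and T(n) be the number of all profiles of size at most n, the real sequence R(n) / T(n) tends to 0 as n → ∞. -/

import Mathlib

/-- A profile: a finitely supported sequence of naturals whose nonzero values
form an initial segment of `ℕ`. -/
def IsProfile (p : ℕ → ℕ) : Prop :=
  (∃ N, ∀ i, N ≤ i → p i = 0) ∧ (∀ i, p i = 0 → p (i + 1) = 0)

/-- Pointwise sum of profiles. -/
def padd (p q : ℕ → ℕ) : ℕ → ℕ := fun i => p i + q i

/-- Product of profiles:
`(p × q)(i) = p(i)·∑_{j≤i} q(j) + q(i)·∑_{j≤i} p(j) − p(i)·q(i)`. -/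
def pmul (p q : ℕ → ℕ) : ℕ → ℕ := fun i =>
  p i * (∑ j ∈ Finset.range (i + 1), q j) + q i * (∑ j ∈ Finset.range (i + 1), p j)
    - p i * q i

/-- The zero profile `0_P`. -/
def pzero : ℕ → ℕ := fun _ => 0

/-- The unit profile `1_P`. -/
def pone : ℕ → ℕ := fun i => if i = 0 then 1 else 0

/-- The size of a profile: the (finite) sum of its values. -/
noncomputable def psize (p : ℕ → ℕ) : ℕ := ∑ᶠ i, p i

/-- A profile is reducible if it is a product of two non-unit profiles. -/
def PReducible (p : ℕ → ℕ) : Prop :=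
  ∃ q r : ℕ → ℕ, IsProfile q ∧ IsProfile r ∧ q ≠ pone ∧ r ≠ pone ∧ p = pmul q r

/-- The number of reducible profiles of size at most `n`. -/
noncomputable def numReducible (n : ℕ) : ℕ :=
  Nat.card {p : ℕ → ℕ // IsProfile p ∧ PReducible p ∧ psize p ≤ n}

/-- The number of profiles of size at most `n`. -/
noncomputable def numProfiles (n : ℕ) : ℕ :=
  Nat.card {p : ℕ → ℕ // IsProfile p ∧ psize p ≤ n}

-- auxiliary lemmas

lemma psize_eq (p : ℕ → ℕ) (N : ℕ) (h : ∀ i, N ≤ i → p i = 0) :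
    psize p = ∑ i ∈ Finset.range N, p i := by
  apply finsum_eq_sum_of_support_subset
  intro x hx
  simp only [Function.mem_support] at hx
  simp only [Finset.coe_range, Set.mem_Iio]
  by_contra hc
  exact hx (h x (by omega))

lemma profile_zero_of_ge {p : ℕ → ℕ} (hp : IsProfile p) {k : ℕ} (hk : p k = 0) :
    ∀ i, k ≤ i → p i = 0 := by
  intro i hi
  induction i with
  | zero => exact (show k = 0 by omega) ▸ hk
  | succ n ih =>
    rcases Nat.lt_or_ge k (n+1) with h | h
    · exact hp.2 n (ih (by omega))
    · have : k = n + 1 := by omega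
      rwa [← this]

lemma psize_zero_iff {p : ℕ → ℕ} (hp : IsProfile p) : psize p = 0 ↔ p = pzero := by
  constructor
  · intro h
    obtain ⟨N, hN⟩ := hp.1
    rw [psize_eq p N hN] at h
    funext i
    rcases Nat.lt_or_ge i N with hi | hi
    · exact Finset.sum_eq_zero_iff.mp h i (Finset.mem_range.mpr hi)
    · exact hN i hi
  · rintro rfl
    simp [psize, pzero]

lemma psize_one_iff {p : ℕ → ℕ} (hp : IsProfile p) : psize p = 1 ↔ p = pone := by
  constructor
  · intro h
    obtain ⟨N, hN⟩ := hp.1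
    have hsum := (psize_eq p N hN).symm.trans h
    have hp0 : p 0 ≠ 0 := by
      intro h0
      have : ∀ i, p i = 0 := fun i => profile_zero_of_ge hp h0 i (by omega)
      rw [Finset.sum_eq_zero (fun i _ => this i)] at hsum; omega
    have hNpos : 0 < N := by
      rcases Nat.eq_zero_or_pos N with rfl | h
      · simp at hsum
      · exact h
    funext i
    rcases eq_or_ne i 0 with rfl | hi
    · have h0le : p 0 ≤ 1 := by
        calc p 0 ≤ ∑ j ∈ Finset.range N, p j :=
          Finset.single_le_sum (fun j _ => Nat.zero_le _) (Finset.mem_range.mpr hNpos)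
        _ = 1 := hsum
      show p 0 = 1
      omega
    · simp only [pone, if_neg hi]
      rcases Nat.lt_or_ge i N with hiN | hiN
      · -- sum = p 0 + rest = 1, p 0 = 1 so rest zero
        have : ∑ j ∈ Finset.range N, p j = 1 := hsum
        by_contra hpi
        have h2 : 2 ≤ ∑ j ∈ Finset.range N, p j := by
          have := Finset.add_sum_erase (Finset.range N) p (Finset.mem_range.mpr hiN)
          have h0mem : (0:ℕ) ∈ (Finset.range N).erase i := by
            simp [Finset.mem_erase, Ne.symm hi, hNpos]
          have := Finset.single_le_sum (f := p) (fun j _ => Nat.zero_le _) h0mem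
          omega
        omega
      · exact hN i hiN
  · rintro rfl
    rw [psize_eq pone 1 (by intro i hi; simp [pone]; omega)]
    simp [pone]

lemma pmul_comm (p q : ℕ → ℕ) : pmul p q = pmul q p := by
  funext i
  simp only [pmul]
  congr 1
  · ring
  · ring

lemma sum_pmul (p q : ℕ → ℕ) (M : ℕ) :
    ∑ i ∈ Finset.range M, pmul p q i =
      (∑ i ∈ Finset.range M, p i) * (∑ i ∈ Finset.range M, q i) := by
  induction M with
  | zero => simp
  | succ M ih =>
    rw [Finset.sum_range_succ, ih, Finset.sum_range_succ p, Finset.sum_range_succ q]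
    simp only [pmul]
    rw [Finset.sum_range_succ p, Finset.sum_range_succ q]
    set P := ∑ i ∈ Finset.range M, p i
    set Q := ∑ i ∈ Finset.range M, q i
    have h1 : p M * (Q + q M) + q M * (P + p M) - p M * q M
        = p M * Q + q M * P + p M * q M := by
      have : p M * (Q + q M) = p M * Q + p M * q M := by ring
      rw [this]
      have : q M * (P + p M) = q M * P + q M * p M := by ring
      rw [this]
      have : q M * p M = p M * q M := by ring
      omega
    rw [h1]; ring

lemma psize_pmul {p q : ℕ → ℕ} (hp : IsProfile p) (hq : IsProfile q) :
    psize (pmul p q) = psize p * psize q := by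
  obtain ⟨N1, h1⟩ := hp.1
  obtain ⟨N2, h2⟩ := hq.1
  set N := max N1 N2 with hN
  have hpN : ∀ i, N ≤ i → p i = 0 := fun i hi => h1 i (by omega)
  have hqN : ∀ i, N ≤ i → q i = 0 := fun i hi => h2 i (by omega)
  have hm : ∀ i, N ≤ i → pmul p q i = 0 := by
    intro i hi
    simp [pmul, hpN i hi, hqN i hi]
  rw [psize_eq _ N hm, psize_eq p N hpN, psize_eq q N hqN, sum_pmul]

lemma pmul_pzero (q : ℕ → ℕ) : pmul q pzero = pzero := by
  funext i
  simp [pmul, pzero]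

lemma isProfile_pzero : IsProfile pzero := ⟨⟨0, fun _ _ => rfl⟩, fun _ _ => rfl⟩

lemma pzero_ne_pone : pzero ≠ pone := by
  intro h
  have := congrFun h 0
  simp [pzero, pone] at this

lemma preducible_pzero : PReducible pzero :=
  ⟨pzero, pzero, isProfile_pzero, isProfile_pzero, pzero_ne_pone, pzero_ne_pone,
    (pmul_pzero pzero).symm⟩

-- list helpers
lemma list_sum_getD (l : List ℕ) : ∑ i ∈ Finset.range l.length, l.getD i 0 = l.sum := by
  induction l with
  | nil => simp
  | cons a t ih =>
    rw [List.length_cons, Finset.sum_range_succ']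
    simp only [List.getD_cons_succ, List.getD_cons_zero, List.sum_cons]
    omega

lemma list_eq_of_getD {l1 l2 : List ℕ} (h1 : ∀ x ∈ l1, 0 < x) (h2 : ∀ x ∈ l2, 0 < x)
    (h : ∀ i, l1.getD i 0 = l2.getD i 0) : l1 = l2 := by
  have hlen : l1.length = l2.length := by
    by_contra hne
    rcases Nat.lt_or_ge l1.length l2.length with hl | hl
    · have := h l1.length
      rw [List.getD_eq_default l1 0 le_rfl, List.getD_eq_getElem l2 0 hl] at this
      exact absurd (h2 _ (List.getElem_mem hl)) (by omega)
    · have hl' : l2.length < l1.length := by omega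
      have := h l2.length
      rw [List.getD_eq_default l2 0 le_rfl, List.getD_eq_getElem l1 0 hl'] at this
      exact absurd (h1 _ (List.getElem_mem hl')) (by omega)
  apply List.ext_getElem hlen
  intro i hi1 hi2
  have := h i
  rwa [List.getD_eq_getElem l1 0 hi1, List.getD_eq_getElem l2 0 hi2] at this

lemma list_sum_map_range (p : ℕ → ℕ) (k : ℕ) :
    ((List.range k).map p).sum = ∑ i ∈ Finset.range k, p i := by
  induction k with
  | zero => simp
  | succ k ih =>
    rw [List.range_succ, List.map_append, List.sum_append, Finset.sum_range_succ, ih]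
    simp

-- the "length" of a profile
lemma profile_exists_zero {p : ℕ → ℕ} (hp : IsProfile p) : ∃ k, p k = 0 := by
  obtain ⟨N, hN⟩ := hp.1
  exact ⟨N, hN N le_rfl⟩

noncomputable def plen {p : ℕ → ℕ} (hp : IsProfile p) : ℕ :=
  Nat.find (profile_exists_zero hp)

lemma plen_spec {p : ℕ → ℕ} (hp : IsProfile p) :
    (∀ i, i < plen hp → p i ≠ 0) ∧ (∀ i, plen hp ≤ i → p i = 0) := by
  constructor
  · intro i hi
    exact Nat.find_min (profile_exists_zero hp) hi
  · intro i hi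
    exact profile_zero_of_ge hp (Nat.find_spec (profile_exists_zero hp)) i hi

lemma plen_le_psize {p : ℕ → ℕ} (hp : IsProfile p) : plen hp ≤ psize p := by
  rw [psize_eq p (plen hp) (plen_spec hp).2]
  calc plen hp = ∑ _i ∈ Finset.range (plen hp), 1 := by simp
  _ ≤ ∑ i ∈ Finset.range (plen hp), p i := by
      apply Finset.sum_le_sum
      intro i hi
      have := (plen_spec hp).1 i (Finset.mem_range.mp hi)
      omega

-- injection profiles of size ≤ n into Composition (n+1)
noncomputable def toComp (n : ℕ) (x : {p : ℕ → ℕ // IsProfile p ∧ psize p ≤ n}) :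
    Composition (n + 1) where
  blocks := (List.range (plen x.2.1)).map x.1 ++ [n + 1 - psize x.1]
  blocks_pos := by
    intro i hi
    rcases List.mem_append.mp hi with h | h
    · obtain ⟨j, hj, rfl⟩ := List.mem_map.mp h
      have := (plen_spec x.2.1).1 j (List.mem_range.mp hj)
      omega
    · have hx := x.2.2
      simp only [List.mem_singleton] at h
      omega
  blocks_sum := by
    rw [List.sum_append, list_sum_map_range]
    have := (psize_eq x.1 (plen x.2.1) (plen_spec x.2.1).2).symm
    have hx := x.2.2
    simp only [List.sum_singleton]
    omega

lemma toComp_injective (n : ℕ) : Function.Injective (toComp n) := by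
  intro x y hxy
  have hb : (toComp n x).blocks = (toComp n y).blocks := by rw [hxy]
  simp only [toComp] at hb
  have hlen : plen x.2.1 = plen y.2.1 := by
    have := congrArg List.length hb
    simp at this
    omega
  have hmaps : (List.range (plen x.2.1)).map x.1 = (List.range (plen y.2.1)).map y.1 := by
    have := List.append_inj_left hb (by simp [hlen])
    exact this
  apply Subtype.ext
  funext i
  rcases Nat.lt_or_ge i (plen x.2.1) with hi | hi
  · have h1 : ((List.range (plen x.2.1)).map x.1).getD i 0 = x.1 i := by
      rw [List.getD_eq_getElem _ 0 (by simpa using hi)]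
      simp
    have h2 : ((List.range (plen y.2.1)).map y.1).getD i 0 = y.1 i := by
      rw [List.getD_eq_getElem _ 0 (by simp [← hlen]; exact hi)]
      simp
    rw [← h1, hmaps, h2]
  · rw [(plen_spec x.2.1).2 i hi, (plen_spec y.2.1).2 i (hlen ▸ hi)]

instance profiles_finite (n : ℕ) : Finite {p : ℕ → ℕ // IsProfile p ∧ psize p ≤ n} :=
  Finite.of_injective (toComp n) (toComp_injective n)

lemma numProfiles_le (n : ℕ) : Nat.card {p : ℕ → ℕ // IsProfile p ∧ psize p ≤ n} ≤ 2 ^ n := by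
  have h := Nat.card_le_card_of_injective (toComp n) (toComp_injective n)
  have h2 : Nat.card (Composition (n+1)) = 2 ^ n := by
    rw [Nat.card_eq_fintype_card, composition_card, Nat.add_sub_cancel]
  omega

-- injection Composition n into profiles of size ≤ n
def ofComp (n : ℕ) (c : Composition n) : {p : ℕ → ℕ // IsProfile p ∧ psize p ≤ n} := by
  refine ⟨fun i => c.blocks.getD i 0, ⟨⟨c.blocks.length, fun i hi => List.getD_eq_default _ 0 hi⟩, ?_⟩, ?_⟩
  · intro i hi
    change c.blocks.getD i 0 = 0 at hi
    apply List.getD_eq_default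
    by_contra hc
    have hlt : i < c.blocks.length := by omega
    rw [List.getD_eq_getElem _ 0 hlt] at hi
    exact absurd (c.blocks_pos (List.getElem_mem hlt)) (by omega)
  · rw [psize_eq _ c.blocks.length (fun i hi => List.getD_eq_default _ 0 hi),
      list_sum_getD, c.blocks_sum]

lemma ofComp_injective (n : ℕ) : Function.Injective (ofComp n) := by
  intro c1 c2 h
  have h' : ∀ i, c1.blocks.getD i 0 = c2.blocks.getD i 0 := by
    intro i
    exact congrFun (congrArg Subtype.val h) i
  exact Composition.ext (list_eq_of_getD (fun x hx => c1.blocks_pos hx)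
    (fun x hx => c2.blocks_pos hx) h')

lemma numProfiles_ge (n : ℕ) :
    2 ^ (n - 1) ≤ Nat.card {p : ℕ → ℕ // IsProfile p ∧ psize p ≤ n} := by
  have h := Nat.card_le_card_of_injective (ofComp n) (ofComp_injective n)
  have h2 : Nat.card (Composition n) = 2 ^ (n-1) := by
    rw [Nat.card_eq_fintype_card, composition_card]
  omega

def Aset (n : ℕ) := {qr : (ℕ → ℕ) × (ℕ → ℕ) //
  IsProfile qr.1 ∧ IsProfile qr.2 ∧ 2 ≤ psize qr.1 ∧ psize qr.1 ≤ psize qr.2 ∧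
    psize qr.1 * psize qr.2 ≤ n}

lemma exists_pair {n : ℕ} {p : ℕ → ℕ} (hred : PReducible p)
    (hs : psize p ≤ n) (hnz : p ≠ pzero) : ∃ x : Aset n, p = pmul x.1.1 x.1.2 := by
  obtain ⟨q, r, hq, hr, hqne, hrne, heq⟩ := hred
  have hsz : psize p = psize q * psize r := heq ▸ psize_pmul hq hr
  have hq2 : 2 ≤ psize q := by
    rcases Nat.lt_or_ge (psize q) 2 with h | h
    · interval_cases h' : psize q
      · exact absurd (by rw [heq, (psize_zero_iff hq).mp h', pmul_comm, pmul_pzero])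
          hnz
      · exact absurd ((psize_one_iff hq).mp h') hqne
    · exact h
  have hr2 : 2 ≤ psize r := by
    rcases Nat.lt_or_ge (psize r) 2 with h | h
    · interval_cases h' : psize r
      · exact absurd (by rw [heq, (psize_zero_iff hr).mp h', pmul_pzero]) hnz
      · exact absurd ((psize_one_iff hr).mp h') hrne
    · exact h
  have hmn : psize q * psize r ≤ n := by omega
  rcases Nat.le_total (psize q) (psize r) with hle | hle
  · exact ⟨⟨(q, r), hq, hr, hq2, hle, hmn⟩, heq⟩
  · exact ⟨⟨(r, q), hr, hq, hr2, hle, (Nat.mul_comm (psize r) (psize q)).symm ▸ hmn⟩, by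
      rw [heq, pmul_comm]⟩

-- Aset n injects into (profiles ≤ √n) × (profiles ≤ n/2)
def asetMap (n : ℕ) (x : Aset n) :
    {p : ℕ → ℕ // IsProfile p ∧ psize p ≤ Nat.sqrt n} ×
    {p : ℕ → ℕ // IsProfile p ∧ psize p ≤ n / 2} :=
  ⟨⟨x.1.1, x.2.1, Nat.le_sqrt.mpr (le_trans (Nat.mul_le_mul_left _ x.2.2.2.2.1) x.2.2.2.2.2)⟩,
   ⟨x.1.2, x.2.2.1, (Nat.le_div_iff_mul_le (by omega)).mpr
      (by calc psize x.1.2 * 2 ≤ psize x.1.2 * psize x.1.1 :=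
            Nat.mul_le_mul_left _ x.2.2.2.1
          _ ≤ n := by rw [Nat.mul_comm]; exact x.2.2.2.2.2)⟩⟩

lemma asetMap_injective (n : ℕ) : Function.Injective (asetMap n) := by
  intro x y h
  simp only [asetMap, Prod.mk.injEq, Subtype.mk.injEq] at h
  exact Subtype.ext (Prod.ext h.1 h.2)

instance aset_finite (n : ℕ) : Finite (Aset n) :=
  Finite.of_injective (asetMap n) (asetMap_injective n)

lemma card_aset_le (n : ℕ) : Nat.card (Aset n) ≤ 2 ^ Nat.sqrt n * 2 ^ (n / 2) := by
  have h := Nat.card_le_card_of_injective (asetMap n) (asetMap_injective n)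
  rw [Nat.card_prod] at h
  calc Nat.card (Aset n) ≤ _ := h
  _ ≤ 2 ^ Nat.sqrt n * 2 ^ (n / 2) :=
      Nat.mul_le_mul (numProfiles_le _) (numProfiles_le _)

open scoped Classical in
noncomputable def redMap (n : ℕ) (x : {p : ℕ → ℕ // IsProfile p ∧ PReducible p ∧ psize p ≤ n}) :
    Option (Aset n) :=
  if h : x.1 = pzero then none
  else some (exists_pair x.2.2.1 x.2.2.2 h).choose

open scoped Classical in
lemma redMap_injective (n : ℕ) : Function.Injective (redMap n) := by
  intro x y h
  by_cases h1 : x.1 = pzero <;> by_cases h2 : y.1 = pzero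
  · exact Subtype.ext (h1.trans h2.symm)
  · exfalso; simp only [redMap, dif_pos h1, dif_neg h2] at h; cases h
  · exfalso; simp only [redMap, dif_neg h1, dif_pos h2] at h; cases h
  · simp only [redMap, dif_neg h1, dif_neg h2, Option.some.injEq] at h
    apply Subtype.ext
    rw [(exists_pair x.2.2.1 x.2.2.2 h1).choose_spec,
        (exists_pair y.2.2.1 y.2.2.2 h2).choose_spec, h]

lemma numReducible_le (n : ℕ) : numReducible n ≤ 1 + 2 ^ Nat.sqrt n * 2 ^ (n / 2) := by
  haveI := Fintype.ofFinite (Aset n)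
  have h := Nat.card_le_card_of_injective (redMap n) (redMap_injective n)
  rw [Finite.card_option] at h
  have := card_aset_le n
  unfold numReducible
  omega

lemma sqrt_le_quarter {n : ℕ} (hn : 36 ≤ n) : Nat.sqrt n ≤ n / 4 := by
  have h : n < (n / 4 + 1) * (n / 4 + 1) := by
    have h3 : 3 * (n / 4) ≤ (n / 4) * (n / 4) :=
      Nat.mul_le_mul_right _ (by omega)
    have hd : (n / 4 + 1) * (n / 4 + 1) = n / 4 * (n / 4) + 2 * (n / 4) + 1 := by ring
    omega
  have := Nat.sqrt_lt'.mpr (by rw [Nat.pow_two]; exact h)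
  omega

lemma key_nat {n : ℕ} (hn : 36 ≤ n) :
    numReducible n * 2 ^ (n / 8) ≤ 4 * numProfiles n := by
  have hs := sqrt_le_quarter hn
  have h1 : numReducible n ≤ 1 + 2 ^ (n / 4) * 2 ^ (n / 2) :=
    le_trans (numReducible_le n)
      (by
        have := Nat.pow_le_pow_right (by omega : 1 ≤ 2) hs
        exact Nat.add_le_add_left (Nat.mul_le_mul_right _ this) 1)
  have h2 : 1 + 2 ^ (n / 4) * 2 ^ (n / 2) ≤ 2 ^ (n / 4 + n / 2 + 1) := by
    rw [pow_succ, pow_add]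
    have : 1 ≤ 2 ^ (n / 4) * 2 ^ (n / 2) := Nat.one_le_iff_ne_zero.mpr (by positivity)
    omega
  have h3 : numReducible n * 2 ^ (n / 8) ≤ 2 ^ (n / 4 + n / 2 + 1 + n / 8) := by
    rw [pow_add (2:ℕ) _ (n/8)]
    exact Nat.mul_le_mul (le_trans h1 h2) le_rfl
  have h4 : n / 4 + n / 2 + 1 + n / 8 ≤ n + 1 := by omega
  have h5 : (2:ℕ) ^ (n / 4 + n / 2 + 1 + n / 8) ≤ 2 ^ (n + 1) :=
    Nat.pow_le_pow_right (by omega) h4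
  have h6 : (2:ℕ) ^ (n + 1) = 4 * 2 ^ (n - 1) := by
    have : n + 1 = 2 + (n - 1) := by omega
    rw [this, pow_add]
    norm_num
  have h7 := numProfiles_ge n
  calc numReducible n * 2 ^ (n / 8) ≤ 2 ^ (n + 1) := le_trans h3 h5
  _ = 4 * 2 ^ (n - 1) := h6
  _ ≤ 4 * numProfiles n := Nat.mul_le_mul_left _ h7

/-- The asymptotic density of reducible profiles is zero. -/
theorem density_reducible_zero :
    Filter.Tendsto (fun n : ℕ => (numReducible n : ℝ) / (numProfiles n : ℝ))
      Filter.atTop (nhds 0) := by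
  have hg : Filter.Tendsto (fun n : ℕ => 4 * (1/2 : ℝ) ^ (n / 8)) Filter.atTop (nhds 0) := by
    have hpow : Filter.Tendsto (fun k : ℕ => (1/2 : ℝ) ^ k) Filter.atTop (nhds 0) :=
      tendsto_pow_atTop_nhds_zero_of_lt_one (by norm_num) (by norm_num)
    have hdiv : Filter.Tendsto (fun n : ℕ => n / 8) Filter.atTop Filter.atTop :=
      Filter.tendsto_atTop_atTop.mpr fun b => ⟨8 * b, fun a ha => by omega⟩
    have := (hpow.comp hdiv).const_mul (4:ℝ)
    simpa using this
  apply tendsto_of_tendsto_of_tendsto_of_le_of_le' tendsto_const_nhds hg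
  · exact Filter.Eventually.of_forall fun n => by positivity
  · filter_upwards [Filter.eventually_ge_atTop 36] with n hn
    have hT : (0:ℝ) < (numProfiles n : ℝ) := by
      have := numProfiles_ge n
      have h1 : 0 < numProfiles n := lt_of_lt_of_le (Nat.pow_pos (by omega)) this
      exact_mod_cast h1
    have h2 : (0:ℝ) < (2:ℝ) ^ (n / 8) := by positivity
    have hk := key_nat hn
    have hk' : (numReducible n : ℝ) * 2 ^ (n / 8) ≤ 4 * (numProfiles n : ℝ) := by
      exact_mod_cast hk
    have : (4:ℝ) * (1/2 : ℝ) ^ (n / 8) = 4 / 2 ^ (n / 8) := by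
      rw [div_pow, one_pow]
      ring
    rw [this, div_le_div_iff₀ hT h2]
    linarith
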